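/- Let M be a real symmetric positive semidefinite d×d matrix that is singular (its smallest eigenvalue is 0), and let λ > 0 and α ≥ 0 be real numbers. Then cond(M + (α + λ)·I_d) ≤ cond(M + λ·I_d), where for a positive definite matrix P, cond(P) denotes the ratio of the largest eigenvalue of P to the smallest eigenvalue of P. -/

import Mathlib

open Matrix

/-- Condition number of a (positive definite) real matrix: the ratio of its largest
eigenvalue to its smallest eigenvalue, expressed via the real spectrum. -/
noncomputable def matrixCond {d : ℕ} (P : Matrix (Fin d) (Fin d) ℝ) : ℝ :=
  sSup (spectrum ℝ P) / sInf (spectrum ℝ P)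

lemma spectrum_add_smul_one {d : ℕ} (M : Matrix (Fin d) (Fin d) ℝ) (c : ℝ) :
    spectrum ℝ (M + c • (1 : Matrix (Fin d) (Fin d) ℝ)) = (· + c) '' spectrum ℝ M := by
  have h : c • (1 : Matrix (Fin d) (Fin d) ℝ) = algebraMap ℝ _ c :=
    (Algebra.algebraMap_eq_smul_one c).symm
  rw [h, ← spectrum.add_singleton_eq, Set.add_singleton]

/-- **Well-conditioned property of RFD, part 1.**  If `M` is symmetric PSD and singular
(its smallest eigenvalue is `0`), then for `λ > 0` and `α ≥ 0`,
`matrixCond (M + (α + λ)·I) ≤ matrixCond (M + λ·I)`. -/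
theorem rfd_well_conditioned_one {d : ℕ} (hd : 0 < d)
    (M : Matrix (Fin d) (Fin d) ℝ) (hM : M.PosSemidef)
    (hsing : 0 ∈ spectrum ℝ M)
    (lam α : ℝ) (hlam : 0 < lam) (hα : 0 ≤ α) :
    matrixCond (M + (α + lam) • (1 : Matrix (Fin d) (Fin d) ℝ))
      ≤ matrixCond (M + lam • (1 : Matrix (Fin d) (Fin d) ℝ)) := by
  set S := spectrum ℝ M with hS
  have hfin : S.Finite := Matrix.finite_real_spectrum
  have hne : S.Nonempty := ⟨0, hsing⟩
  have hbdd : BddAbove S := hfin.bddAbove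
  have hlb : ∀ x ∈ S, (0:ℝ) ≤ x := by
    intro x hx
    rw [hS, hM.isHermitian.spectrum_real_eq_range_eigenvalues] at hx
    obtain ⟨i, rfl⟩ := hx
    exact hM.eigenvalues_nonneg i
  have hInf : sInf S = 0 :=
    le_antisymm (csInf_le hfin.bddBelow hsing) (le_csInf hne hlb)
  set b := sSup S with hb
  have hb0 : 0 ≤ b := le_csSup hbdd hsing
  have key : ∀ c : ℝ, matrixCond (M + c • (1 : Matrix (Fin d) (Fin d) ℝ))
      = (b + c) / c := by
    intro c
    have hσ := spectrum_add_smul_one M c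
    have hmap : (· + c) = (OrderIso.addRight c : ℝ → ℝ) := rfl
    unfold matrixCond
    rw [hσ, hmap, ← OrderIso.map_csSup' _ hne hbdd,
      ← OrderIso.map_csInf' _ hne hfin.bddBelow, hInf]
    simp [hb]
  rw [key, key]
  rw [div_le_div_iff₀ (by linarith) hlam]
  nlinarith
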